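/- Suppose x, y ∈ ℝ^d, x' ∈ ξ, and ‖x − x'‖ < 2 + ε/2 with the angle between the vectors y − x and x' − x at most 35°, ‖x − y‖ > ρ ≥ 100, and ε < 0.1. Then ‖y − x'‖ < ‖y − x‖. -/

import Mathlib

/-- Distance-decreasing step. If `‖x - x'‖ < 2 + ε/2`, the angle between
`y - x` and `x' - x` is at most `35°`, `‖x - y‖ > ρ ≥ 100`, and `0 < ε < 0.1`, then
`‖y - x'‖ < ‖y - x‖`. -/
theorem stmt_4 {d : ℕ} (ε ρ : ℝ) (hε : 0 < ε) (hε1 : ε < 0.1) (hρ : 100 ≤ ρ)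
    (x y x' : EuclideanSpace ℝ (Fin d))
    (hxx' : dist x x' < 2 + ε / 2)
    (hangle : InnerProductGeometry.angle (y - x) (x' - x) ≤ 35 * Real.pi / 180)
    (hfar : ρ < dist x y) :
    dist y x' < dist y x := by
  set a := y - x with ha
  set b := x' - x with hb
  have hb0 : b ≠ 0 := by
    intro h
    rw [h, InnerProductGeometry.angle_zero_right] at hangle
    nlinarith [Real.pi_pos]
  have hbnorm : 0 < ‖b‖ := norm_pos_iff.mpr hb0
  have hbn2 : ‖b‖ < 2 + ε / 2 := by
    have : dist x x' = ‖b‖ := by rw [dist_eq_norm, hb, norm_sub_rev]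
    linarith
  have han : 100 < ‖a‖ := by
    have : dist x y = ‖a‖ := by rw [dist_eq_norm, ha, norm_sub_rev]
    linarith
  have hcos : (1:ℝ)/2 ≤ Real.cos (InnerProductGeometry.angle a b) := by
    have h1 : InnerProductGeometry.angle a b ≤ Real.pi / 3 := by
      have : 35 * Real.pi / 180 ≤ Real.pi / 3 := by nlinarith [Real.pi_pos]
      linarith
    have h2 := Real.cos_le_cos_of_nonneg_of_le_pi
      (InnerProductGeometry.angle_nonneg a b) (by linarith [Real.pi_pos]) h1
    rw [show Real.pi / 3 = Real.pi / 3 from rfl] at h2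
    have := Real.cos_pi_div_three
    linarith
  have hinner : Real.cos (InnerProductGeometry.angle a b) * (‖a‖ * ‖b‖)
      = inner ℝ a b := InnerProductGeometry.cos_angle_mul_norm_mul_norm a b
  have hlaw : ‖a - b‖ ^ 2 = ‖a‖ ^ 2 - 2 * inner ℝ a b + ‖b‖ ^ 2 :=
    norm_sub_sq_real a b
  have hsq : ‖a - b‖ ^ 2 < ‖a‖ ^ 2 := by
    have : ‖b‖ ^ 2 < 2 * inner ℝ a b := by
      rw [← hinner]
      nlinarith [mul_pos hbnorm (show (0:ℝ) < ‖a‖ by linarith),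
        mul_lt_mul_of_pos_right han hbnorm,
        mul_le_mul_of_nonneg_right (mul_le_mul_of_nonneg_left hcos (le_of_lt hbnorm)) (norm_nonneg a)]
    linarith
  have hlt : ‖a - b‖ < ‖a‖ := by
    nlinarith [norm_nonneg (a - b), norm_nonneg a]
  have h1 : dist y x' = ‖a - b‖ := by
    rw [dist_eq_norm, ha, hb]; congr 1; abel
  have h2 : dist y x = ‖a‖ := by rw [dist_eq_norm]
  rw [h1, h2]; exact hlt
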